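/- Let f : ℝ^{n+m} → ℝ^n be an L-Lipschitz map which is differentiable at a point x with |J^n f|(x) = 0 (equivalently rank Df(x) < n). Then Θ_*^n(f,x) = Θ^{*n}(f,x) = 0. -/

import Mathlib

open MeasureTheory Metric Set Filter
open scoped ENNReal NNReal Topology

noncomputable section

abbrev EucSp (k : ℕ) := EuclideanSpace ℝ (Fin k)

/-- The volume of the unit ball in `ℝ^n`. -/
def unitBallVol (n : ℕ) : ℝ≥0∞ := volume (Metric.ball (0 : EucSp n) 1)

/-- The `n`-dimensional Hausdorff content. -/
def hContent {X : Type*} [PseudoEMetricSpace X] (n : ℕ) (E : Set X) : ℝ≥0∞ :=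
  ⨅ (A : ℕ → Set X) (_ : E ⊆ ⋃ i, A i),
    unitBallVol n / 2 ^ n * ∑' i, EMetric.diam (A i) ^ n

/-- Upper n-density. -/
def upperDensity {k : ℕ} {X : Type*} [PseudoEMetricSpace X] (n : ℕ)
    (f : EucSp k → X) (A : Set (EucSp k)) (x : EucSp k) : ℝ≥0∞ :=
  Filter.limsup
    (fun r : ℝ => hContent n (f '' (Metric.ball x r ∩ A)) /
      (unitBallVol n * ENNReal.ofReal r ^ n)) (𝓝[>] (0:ℝ))

def lowerDensity {k : ℕ} {X : Type*} [PseudoEMetricSpace X] (n : ℕ)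
    (f : EucSp k → X) (A : Set (EucSp k)) (x : EucSp k) : ℝ≥0∞ :=
  Filter.liminf
    (fun r : ℝ => hContent n (f '' (Metric.ball x r ∩ A)) /
      (unitBallVol n * ENNReal.ofReal r ^ n)) (𝓝[>] (0:ℝ))

def IsDensityPoint {k : ℕ} (E : Set (EucSp k)) (x : EucSp k) : Prop :=
  Filter.Tendsto (fun r : ℝ => volume (E ∩ Metric.ball x r) / volume (Metric.ball x r))
    (𝓝[>] (0:ℝ)) (𝓝 1)

def HasApproxDerivWithinAt {k : ℕ} (A : Set (EucSp k)) (f : EucSp k → ℝ)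
    (L : EucSp k →ₗ[ℝ] ℝ) (x : EucSp k) : Prop :=
  ∃ Ax : Set (EucSp k), Ax ⊆ A ∧ MeasurableSet Ax ∧ IsDensityPoint Ax x ∧
    Filter.Tendsto (fun y => |f y - f x - L (y - x)| / ‖y - x‖) (𝓝[Ax] x) (𝓝 0)

abbrev LpInfty := lp (fun _ : ℕ => ℝ) ∞

def HasCompApproxDerivWithinAt {k : ℕ} (A : Set (EucSp k)) (f : EucSp k → LpInfty)
    (D : EucSp k →ₗ[ℝ] (ℕ → ℝ)) (x : EucSp k) : Prop :=
  ∀ i : ℕ, HasApproxDerivWithinAt A (fun y => f y i) ((LinearMap.proj i).comp D) x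

def IsBiLipC1DiffeoOn {k : ℕ} (G Ginv : EucSp k → EucSp k) (U : Set (EucSp k)) : Prop :=
  IsOpen U ∧ IsOpen (G '' U) ∧ (∀ x ∈ U, Ginv (G x) = x) ∧ (∀ y ∈ G '' U, G (Ginv y) = y) ∧
    ContDiffOn ℝ 1 G U ∧ ContDiffOn ℝ 1 Ginv (G '' U) ∧
    ∃ Λ : ℝ≥0, LipschitzOnWith Λ G U ∧ LipschitzOnWith Λ Ginv (G '' U)

def IsFinCoordPerm (Ψ : LpInfty → LpInfty) : Prop :=
  ∃ σ : Equiv.Perm ℕ, {i | σ i ≠ i}.Finite ∧ ∀ (x : LpInfty) (i : ℕ), Ψ x i = x (σ i)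

def openCube {k : ℕ} (c : EucSp k) (d : ℝ) : Set (EucSp k) := {x | ∀ i, |x i - c i| < d / 2}

def closedCube {k : ℕ} (c : EucSp k) (d : ℝ) : Set (EucSp k) := {x | ∀ i, |x i - c i| ≤ d / 2}

def hnmContent {N : ℕ} {X : Type*} [PseudoEMetricSpace X] (n m : ℕ)
    (f : EucSp N → X) (Q : Set (EucSp N)) : ℝ≥0∞ :=
  ⨅ (c : ℕ → EucSp N) (d : ℕ → ℝ) (_ : ∀ j, 0 ≤ d j) (_ : ∀ j, openCube (c j) (d j) ⊆ Q)
    (_ : Pairwise (Function.onFun Disjoint fun j => openCube (c j) (d j)))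
    (_ : volume (Q \ ⋃ j, openCube (c j) (d j)) = 0),
    ∑' j, hContent n (f '' openCube (c j) (d j)) * ENNReal.ofReal (d j) ^ m

def matrixRow {n k : ℕ} (D : Matrix (Fin n) (Fin k) ℝ) (i : Fin n) : EucSp k →ₗ[ℝ] ℝ :=
  (EuclideanSpace.proj i).toLinearMap.comp (Matrix.toEuclideanLin D)

def jacDet {n k : ℕ} (D : Matrix (Fin n) (Fin k) ℝ) : ℝ := Real.sqrt ((D * D.transpose).det)

def upperLintegral {Y : Type*} [MeasurableSpace Y] (μ : Measure Y) (g : Y → ℝ≥0∞) : ℝ≥0∞ :=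
  ⨅ (h : Y → ℝ≥0∞) (_ : Measurable h) (_ : ∀ y, g y ≤ h y), ∫⁻ y, h y ∂μ



section MyHelpers

lemma my_coord_abs_le_norm {k : ℕ} (w : EucSp k) (i : Fin k) : |w i| ≤ ‖w‖ := by
  rw [EuclideanSpace.norm_eq, ← Real.sqrt_sq_eq_abs]
  apply Real.sqrt_le_sqrt
  calc (w i) ^ 2 = ‖w i‖ ^ 2 := by rw [Real.norm_eq_abs, sq_abs]
    _ ≤ ∑ j, ‖w j‖ ^ 2 := Finset.single_le_sum (f := fun j => ‖w j‖ ^ 2)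
          (fun j _ => sq_nonneg _) (Finset.mem_univ i)

lemma my_hContent_mono {X : Type*} [PseudoEMetricSpace X] (n : ℕ) {E F : Set X} (h : E ⊆ F) :
    hContent n E ≤ hContent n F :=
  iInf_mono fun _A => iInf_mono' fun hF => ⟨h.trans hF, le_rfl⟩

lemma my_hContent_isometry_le {X Y : Type*} [PseudoEMetricSpace X] [PseudoEMetricSpace Y]
    (n : ℕ) {g : X → Y} (hg : Isometry g) (E : Set X) :
    hContent n (g '' E) ≤ hContent n E := by
  refine le_iInf fun A => le_iInf fun hA => ?_
  refine iInf_le_of_le (fun i => g '' A i) (iInf_le_of_le ?_ ?_)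
  · calc g '' E ⊆ g '' ⋃ i, A i := Set.image_mono hA
      _ = ⋃ i, g '' A i := Set.image_iUnion
  · refine le_of_eq ?_
    congr 1
    exact tsum_congr fun i => by beta_reduce; exact congrArg (· ^ n) (hg.ediam_image (A i))

lemma my_hContent_le_of_cover {X : Type*} [PseudoEMetricSpace X] {n : ℕ} (hn : n ≠ 0)
    {E : Set X} {N : ℕ} (s : Fin N → Set X) (hcov : E ⊆ ⋃ j, s j)
    {D : ℝ≥0∞} (hd : ∀ j, EMetric.diam (s j) ≤ D) :
    hContent n E ≤ unitBallVol n / 2 ^ n * (N * D ^ n) := by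
  classical
  set A : ℕ → Set X := fun j => if h : j < N then s ⟨j, h⟩ else ∅ with hA
  have hcov' : E ⊆ ⋃ j, A j := by
    refine hcov.trans (Set.iUnion_subset fun j => ?_)
    refine Set.subset_iUnion_of_subset (j : ℕ) ?_
    simp [A, j.isLt]
  have step : hContent n E ≤ unitBallVol n / 2 ^ n * ∑' j, EMetric.diam (A j) ^ n :=
    iInf₂_le A hcov'
  refine step.trans ?_
  refine mul_le_mul_right ?_ _
  have hsum : ∑' j, EMetric.diam (A j) ^ n = ∑ j ∈ Finset.range N, EMetric.diam (A j) ^ n := by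
    refine tsum_eq_sum fun j hj => ?_
    have hj' : ¬ j < N := by simpa using hj
    simp [A, hj', EMetric.diam, EMetric.diam_empty, zero_pow hn]
  rw [hsum]
  calc ∑ j ∈ Finset.range N, EMetric.diam (A j) ^ n
      ≤ ∑ _j ∈ Finset.range N, D ^ n := by
        refine Finset.sum_le_sum fun j hj => ?_
        have hj' : j < N := Finset.mem_range.mp hj
        simp only [A, dif_pos hj']
        exact pow_le_pow_left₀ (zero_le') (hd _) n
    _ = N * D ^ n := by simp [Finset.sum_const, Finset.card_range, nsmul_eq_mul]

lemma my_box_bound {n : ℕ} (hn : n ≠ 0) (i0 : Fin n) (a δ : ℝ) (hδ : 0 < δ) (N : ℕ)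
    (hN : a / (2 * δ) + 1 / 2 ≤ N) :
    hContent n {w : EucSp n | (∀ i, |w i| ≤ a) ∧ |w i0| ≤ δ} ≤
      unitBallVol n / 2 ^ n *
        ((3 * (2 * N + 1) ^ (n - 1) : ℕ) * ENNReal.ofReal (2 * δ * Real.sqrt n) ^ n) := by
  classical
  have h2δ : (0:ℝ) < 2 * δ := by linarith
  set C : (Fin n → ℤ) → Set (EucSp n) :=
    fun k => {w | ∀ i, |w i - 2 * δ * (k i)| ≤ δ} with hCdef
  set I : Finset (Fin n → ℤ) :=
    Fintype.piFinset (fun i => if i = i0 then Finset.Icc (-1) 1 else Finset.Icc (-(N:ℤ)) N)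
    with hIdef
  have hcard : I.card = 3 * (2 * N + 1) ^ (n - 1) := by
    rw [hIdef, Fintype.card_piFinset]
    rw [← Finset.mul_prod_erase Finset.univ _ (Finset.mem_univ i0)]
    rw [if_pos rfl]
    have h1 : (Finset.Icc (-1 : ℤ) 1).card = 3 := by rw [Int.card_Icc]; rfl
    have h2 : ∀ i ∈ Finset.univ.erase i0,
        ((if i = i0 then Finset.Icc (-1 : ℤ) 1 else Finset.Icc (-(N:ℤ)) N)).card = 2 * N + 1 := by
      intro i hi
      rw [if_neg (Finset.ne_of_mem_erase hi)]
      rw [Int.card_Icc]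
      omega
    rw [h1, Finset.prod_congr rfl h2, Finset.prod_const,
      Finset.card_erase_of_mem (Finset.mem_univ i0), Finset.card_univ, Fintype.card_fin]
  have hdiam : ∀ k, EMetric.diam (C k) ≤ ENNReal.ofReal (2 * δ * Real.sqrt n) := by
    intro k
    have hnn : (0:ℝ) ≤ 2 * δ * Real.sqrt n := by positivity
    refine EMetric.diam_le fun w hw w' hw' => ?_
    rw [edist_dist]
    refine ENNReal.ofReal_le_ofReal ?_
    rw [EuclideanSpace.dist_eq]
    have hb : ∀ i : Fin n, dist (w i) (w' i) ^ 2 ≤ (2*δ)^2 := by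
      intro i
      have h1 : |w i - 2*δ*(k i)| ≤ δ := hw i
      have h2 : |w' i - 2*δ*(k i)| ≤ δ := hw' i
      have hd : dist (w i) (w' i) ≤ 2*δ := by
        rw [Real.dist_eq]
        calc |w i - w' i| = |(w i - 2*δ*(k i)) + (2*δ*(k i) - w' i)| := by
              rw [show w i - w' i = (w i - 2*δ*(k i)) + (2*δ*(k i) - w' i) by ring]
          _ ≤ |w i - 2*δ*(k i)| + |2*δ*(k i) - w' i| := abs_add_le _ _
          _ ≤ δ + δ := add_le_add h1 (by rwa [abs_sub_comm])
          _ = 2*δ := by ring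
      exact pow_le_pow_left₀ dist_nonneg hd 2
    have hsum : ∑ i, dist (w i) (w' i) ^ 2 ≤ (n : ℝ) * (2*δ)^2 := by
      refine (Finset.sum_le_sum fun i _ => hb i).trans_eq ?_
      rw [Finset.sum_const, Finset.card_univ, Fintype.card_fin, nsmul_eq_mul]
    refine (Real.sqrt_le_sqrt hsum).trans (le_of_eq ?_)
    rw [Real.sqrt_mul (by positivity), Real.sqrt_sq (by linarith)]
    ring
  have hcov : {w : EucSp n | (∀ i, |w i| ≤ a) ∧ |w i0| ≤ δ} ⊆
      ⋃ j : Fin I.card, C (I.equivFin.symm j : Fin n → ℤ) := by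
    intro w hw
    set k : Fin n → ℤ := fun i => if i = i0 then 0 else round (w i / (2 * δ)) with hk
    have hwC : w ∈ C k := by
      intro i
      by_cases hi : i = i0
      · subst hi
        simp only [hCdef, hk, if_pos rfl]
        simpa using hw.2
      · simp only [hCdef, hk, if_neg hi]
        have hrw : w i - 2*δ*((round (w i / (2*δ)) : ℤ) : ℝ)
            = (2*δ) * (w i / (2*δ) - ((round (w i / (2*δ)) : ℤ) : ℝ)) := by
          field_simp
        rw [hrw, abs_mul, abs_of_pos h2δ]
        calc 2*δ * |w i / (2*δ) - ((round (w i / (2*δ)) : ℤ) : ℝ)| ≤ 2*δ * (1/2) :=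
              mul_le_mul_of_nonneg_left (abs_sub_round _) (le_of_lt h2δ)
          _ = δ := by ring
    have hkI : k ∈ I := by
      rw [hIdef, Fintype.mem_piFinset]
      intro i
      by_cases hi : i = i0
      · subst hi
        simp [hk]
      · rw [if_neg hi]
        simp only [hk, if_neg hi]
        have h1 : |w i / (2*δ)| ≤ a / (2*δ) := by
          rw [abs_div, abs_of_pos h2δ]
          exact (div_le_div_iff_of_pos_right h2δ).mpr (hw.1 i)
        have h2 : |((round (w i / (2*δ)) : ℤ) : ℝ)| ≤ N := by
          calc |((round (w i / (2*δ)) : ℤ) : ℝ)|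
              = |w i / (2*δ) - (w i / (2*δ) - ((round (w i / (2*δ)) : ℤ) : ℝ))| := by
                congr 1; ring
            _ ≤ |w i / (2*δ)| + |w i / (2*δ) - ((round (w i / (2*δ)) : ℤ) : ℝ)| := abs_sub _ _
            _ ≤ a/(2*δ) + 1/2 := add_le_add h1 (abs_sub_round _)
            _ ≤ N := hN
        have h3 : |round (w i / (2*δ))| ≤ (N : ℤ) := by exact_mod_cast h2
        exact Finset.mem_Icc.mpr (abs_le.mp h3)
    refine Set.mem_iUnion.mpr ⟨I.equivFin ⟨k, hkI⟩, ?_⟩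
    simpa using hwC
  have hfinal := my_hContent_le_of_cover hn (fun j => C (I.equivFin.symm j : Fin n → ℤ)) hcov
    (fun j => hdiam _)
  rw [hcard] at hfinal
  exact hfinal

end MyHelpers

set_option maxHeartbeats 1000000 in
/-- if `f : ℝ^{n+m} → ℝ^n` is `L`-Lipschitz and differentiable at `x`
with `|J^n f|(x) = 0` (equivalently `rank Df(x) < n`), then
`Θ_*^n(f,x) = Θ^{*n}(f,x) = 0`. -/
theorem stmt19 {n m : ℕ}
    (f : EucSp (n + m) → EucSp n) (L : ℝ≥0) (hf : LipschitzWith L f)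
    (x : EucSp (n + m)) (M : Matrix (Fin n) (Fin (n + m)) ℝ)
    (hdiff : HasFDerivAt f (Matrix.toEuclideanLin M).toContinuousLinearMap x)
    (hJ : jacDet M = 0) :
    lowerDensity n f Set.univ x = 0 ∧ upperDensity n f Set.univ x = 0 := by
  classical
  set T := (Matrix.toEuclideanLin M).toContinuousLinearMap with hT
  -- `det (M * Mᵀ) = 0`
  have hpsd : (M * M.transpose).PosSemidef := by
    simpa using Matrix.posSemidef_self_mul_conjTranspose M
  have hdet0 : (M * M.transpose).det = 0 := by
    have h2 : 0 ≤ (M * M.transpose).det := by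
      rw [hpsd.isHermitian.det_eq_prod_eigenvalues]
      have := Finset.prod_nonneg (fun i (_ : i ∈ Finset.univ) => hpsd.eigenvalues_nonneg i)
      exact_mod_cast this
    have h1 : (M * M.transpose).det ≤ 0 := by
      by_contra h
      push_neg at h
      have := Real.sqrt_pos.mpr h
      rw [jacDet] at hJ
      linarith
    linarith
  have hn : n ≠ 0 := by
    intro h
    subst h
    rw [Matrix.det_fin_zero] at hdet0
    norm_num at hdet0
  -- a unit vector orthogonal to the range of the derivative
  obtain ⟨v, hvnorm, hker⟩ : ∃ v : EucSp n, ‖v‖ = 1 ∧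
      ∀ w : EucSp (n+m), (inner ℝ ((Matrix.toEuclideanLin M) w) v : ℝ) = 0 := by
    obtain ⟨v0, hv0ne, hv0⟩ := (Matrix.exists_mulVec_eq_zero_iff).mpr hdet0
    have hMt : M.transpose.mulVec v0 = 0 := by
      have hdot : dotProduct (M.transpose.mulVec v0) (M.transpose.mulVec v0) = 0 := by
        rw [Matrix.dotProduct_mulVec, Matrix.mulVec_transpose, Matrix.vecMul_vecMul]
        have hsymm : M * M.transpose = (M * M.transpose).transpose := by
          rw [Matrix.transpose_mul, Matrix.transpose_transpose]
        rw [hsymm, Matrix.vecMul_transpose, hv0, zero_dotProduct]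
      exact dotProduct_self_eq_zero.mp hdot
    set u : EucSp n := (WithLp.equiv 2 (Fin n → ℝ)).symm v0 with hu
    have hune : u ≠ 0 := by simpa [hu] using hv0ne
    refine ⟨‖u‖⁻¹ • u, norm_smul_inv_norm hune, fun w => ?_⟩
    rw [real_inner_smul_right]
    suffices h : (inner ℝ ((Matrix.toEuclideanLin M) w) u : ℝ) = 0 by rw [h]; ring
    rw [PiLp.inner_apply]
    simp only [RCLike.inner_apply, starRingEnd_apply, star_trivial]
    have hco : ∀ i, (Matrix.toEuclideanLin M w) i
        = M.mulVec (WithLp.equiv 2 (Fin (n+m) → ℝ) w) i := fun i => rfl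
    rw [Finset.sum_congr rfl fun i _ => mul_comm (u i) _]
    calc ∑ i, star ((Matrix.toEuclideanLin M w) i) * u i
        = dotProduct (M.mulVec (WithLp.equiv 2 (Fin (n+m) → ℝ) w)) v0 := by
          simp only [dotProduct, star_trivial]
          exact Finset.sum_congr rfl fun i _ => by rw [hco i]; rfl
      _ = dotProduct v0 (M.mulVec (WithLp.equiv 2 (Fin (n+m) → ℝ) w)) :=
          dotProduct_comm _ _
      _ = 0 := by
          rw [Matrix.dotProduct_mulVec, ← Matrix.mulVec_transpose, hMt, zero_dotProduct]
  -- an orthonormal basis whose `i0`-th vector is `v`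
  have i0 : Fin n := ⟨0, Nat.pos_of_ne_zero hn⟩
  have horth : Orthonormal ℝ (({i0} : Set (Fin n)).restrict (fun _ : Fin n => v)) := by
    rw [orthonormal_iff_ite]
    intro i j
    have hij : i = j := by
      refine Subtype.ext ?_
      have h1 := i.2
      have h2 := j.2
      rw [Set.mem_singleton_iff] at h1 h2
      rw [h1, h2]
    subst hij
    rw [if_pos rfl]
    rw [real_inner_self_eq_norm_sq, show ({i0} : Set (Fin n)).restrict (fun _ : Fin n => v) i = v from rfl, hvnorm]
    norm_num
  obtain ⟨b, hb⟩ := horth.exists_orthonormalBasis_extension_of_card_eq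
    (by simp [finrank_euclideanSpace_fin])
  have hbv : b i0 = v := hb i0 rfl
  -- the constant
  set Creal : ℝ := 3 * ((L:ℝ) + 5) ^ (n - 1) * (2 * Real.sqrt n) ^ n with hCreal
  have hC0 : 0 ≤ Creal := by positivity
  -- main estimate
  have main : ∀ ε : ℝ, ε ∈ Set.Ioc (0:ℝ) 1 →
      upperDensity n f Set.univ x ≤ ENNReal.ofReal (Creal * ε) := by
    intro ε hε
    obtain ⟨hε0, hε1⟩ := hε
    obtain ⟨δ₀, hδ₀pos, hδ₀⟩ := Metric.eventually_nhds_iff.mp (hdiff.isLittleO.def hε0)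
    obtain ⟨N, hN⟩ : ∃ N : ℕ, N = ⌈(L:ℝ) / (2 * ε)⌉₊ + 1 := ⟨_, rfl⟩
    have hstep : (2 * (N:ℝ) + 1) * ε ≤ (L:ℝ) + 5 := by
      have h1 : ((N:ℝ)) < (L:ℝ)/(2*ε) + 2 := by
        rw [hN]
        push_cast
        have := Nat.ceil_lt_add_one (by positivity : (0:ℝ) ≤ (L:ℝ)/(2*ε))
        linarith
      have hLdiv : (L:ℝ)/(2*ε)*(2*ε) = L := div_mul_cancel₀ _ (by positivity)
      have h1' := mul_lt_mul_of_pos_right h1 (by positivity : (0:ℝ) < 2*ε)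
      have hexp : ((L:ℝ)/(2*ε)+2)*(2*ε) = (L:ℝ)/(2*ε)*(2*ε) + 4*ε := by ring
      have h2 : (N:ℝ)*(2*ε) < (L:ℝ) + 4*ε := by linarith [h1', hexp, hLdiv]
      linarith [h2, hε1, hε0]
    have hcount : ((3 * (2 * N + 1) ^ (n - 1) : ℕ) : ℝ) * (2 * ε * Real.sqrt n) ^ n
        ≤ Creal * ε := by
      obtain ⟨p, hp⟩ : ∃ p, n = p + 1 :=
        ⟨n - 1, (Nat.succ_pred_eq_of_pos (Nat.pos_of_ne_zero hn)).symm⟩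
      rw [hCreal, hp]
      simp only [Nat.add_sub_cancel]
      have sq0 : (0:ℝ) ≤ Real.sqrt (p+1 : ℕ) := Real.sqrt_nonneg _
      have alg : ∀ q s e : ℝ, (3 * q^p) * (2*e*s)^(p+1) = 3*(q*e)^p * ((2*s)^(p+1) * e) := by
        intro q s e
        ring
      have hcast : ((3 * (2 * N + 1) ^ p : ℕ) : ℝ) = 3 * (2*(N:ℝ)+1)^p := by
        push_cast
        ring
      have lhs_eq : ((3 * (2 * N + 1) ^ p : ℕ) : ℝ) * (2 * ε * Real.sqrt (p+1 : ℕ)) ^ (p+1)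
          = 3 * ((2*(N:ℝ)+1)*ε)^p * ((2*Real.sqrt (p+1 : ℕ))^(p+1) * ε) := by
        rw [hcast]
        exact alg _ _ _
      rw [lhs_eq]
      have hmid : ((2*(N:ℝ)+1)*ε)^p ≤ ((L:ℝ)+5)^p := by
        refine pow_le_pow_left₀ ?_ hstep p
        positivity
      calc 3 * ((2*(N:ℝ)+1)*ε)^p * ((2*Real.sqrt (p+1 : ℕ))^(p+1) * ε)
          ≤ 3 * ((L:ℝ)+5)^p * ((2*Real.sqrt (p+1 : ℕ))^(p+1) * ε) := by
            have hnn : (0:ℝ) ≤ (2*Real.sqrt (p+1 : ℕ))^(p+1) * ε := by positivity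
            exact mul_le_mul_of_nonneg_right
              (mul_le_mul_of_nonneg_left hmid (by norm_num)) hnn
        _ = 3 * ((L:ℝ) + 5) ^ p * (2 * Real.sqrt (p+1 : ℕ)) ^ (p+1) * ε := by ring
    have hev : ∀ᶠ r in 𝓝[>] (0:ℝ),
        hContent n (f '' (Metric.ball x r ∩ Set.univ)) /
          (unitBallVol n * ENNReal.ofReal r ^ n) ≤ ENNReal.ofReal (Creal * ε) := by
      filter_upwards [Ioo_mem_nhdsGT_of_mem (Set.mem_Ico.mpr ⟨le_refl (0:ℝ), hδ₀pos⟩)]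
        with r hr
      obtain ⟨hr0, hrδ⟩ := hr
      rw [Set.inter_univ]
      refine ENNReal.div_le_of_le_mul ?_
      set Slab : Set (EucSp n) :=
        {z | ‖z - f x‖ ≤ (L:ℝ)*r ∧ |(inner ℝ (z - f x) v : ℝ)| ≤ ε*r} with hSlab
      have hfb : f '' Metric.ball x r ⊆ Slab := by
        rintro _ ⟨y, hy, rfl⟩
        have hyx : dist y x < r := mem_ball.mp hy
        constructor
        · calc ‖f y - f x‖ = dist (f y) (f x) := (dist_eq_norm _ _).symm
            _ ≤ L * dist y x := hf.dist_le_mul y x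
            _ ≤ (L:ℝ) * r := mul_le_mul_of_nonneg_left (le_of_lt hyx) L.coe_nonneg
        · have herr : ‖f y - f x - T (y - x)‖ ≤ ε * ‖y - x‖ := hδ₀ (hyx.trans hrδ)
          have hsplit : f y - f x = (f y - f x - T (y - x)) + T (y - x) := by abel
          rw [hsplit, inner_add_left]
          have hTz : (inner ℝ (T (y - x)) v : ℝ) = 0 := by
            have := hker (y - x)
            simpa [hT] using this
          rw [hTz, add_zero]
          calc |(inner ℝ (f y - f x - T (y - x)) v : ℝ)|
              ≤ ‖f y - f x - T (y - x)‖ * ‖v‖ := abs_real_inner_le_norm _ _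
            _ = ‖f y - f x - T (y - x)‖ := by rw [hvnorm, mul_one]
            _ ≤ ε * ‖y - x‖ := herr
            _ ≤ ε * r := by
                have hnr : ‖y - x‖ ≤ r := by rw [← dist_eq_norm]; exact hyx.le
                exact mul_le_mul_of_nonneg_left hnr hε0.le
      set φ : EucSp n → EucSp n := fun z => b.repr (z - f x) with hφ
      set ψ : EucSp n → EucSp n := fun w => b.repr.symm w + f x with hψ
      have hψiso : Isometry ψ := by
        have h1 : Isometry (fun w : EucSp n => b.repr.symm w) := b.repr.symm.isometry
        have h2 : Isometry (fun z : EucSp n => z + f x) := (IsometryEquiv.addRight (f x)).isometry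
        exact h2.comp h1
      have hcomp : ∀ z, ψ (φ z) = z := by
        intro z
        simp [hφ, hψ]
      set Box : Set (EucSp n) := {w | (∀ i, |w i| ≤ (L:ℝ)*r) ∧ |w i0| ≤ ε*r} with hBox
      have hφS : φ '' Slab ⊆ Box := by
        rintro _ ⟨z, hz, rfl⟩
        constructor
        · intro i
          calc |φ z i| ≤ ‖φ z‖ := my_coord_abs_le_norm _ _
            _ = ‖z - f x‖ := b.repr.norm_map _
            _ ≤ (L:ℝ)*r := hz.1
        · have hrepr : φ z i0 = (inner ℝ (b i0) (z - f x) : ℝ) := b.repr_apply_apply _ _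
          rw [hrepr, hbv, real_inner_comm]
          exact hz.2
      have hS_eq : Slab = ψ '' (φ '' Slab) := by
        rw [Set.image_image]
        have hfun : (fun z => ψ (φ z)) = fun z => z := funext hcomp
        rw [hfun, Set.image_id']
      have hchain : hContent n (f '' Metric.ball x r) ≤ hContent n Box := by
        calc hContent n (f '' Metric.ball x r) ≤ hContent n Slab := my_hContent_mono n hfb
          _ = hContent n (ψ '' (φ '' Slab)) := by rw [← hS_eq]
          _ ≤ hContent n (φ '' Slab) := my_hContent_isometry_le n hψiso _
          _ ≤ hContent n Box := my_hContent_mono n hφS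
      have hNbound : (L:ℝ)*r / (2*(ε*r)) + 1/2 ≤ N := by
        have hq : (L:ℝ)*r / (2*(ε*r)) = (L:ℝ)/(2*ε) := by
          rw [div_eq_div_iff (by positivity) (by positivity)]
          ring
        rw [hq, hN]
        push_cast
        have := Nat.le_ceil ((L:ℝ)/(2*ε))
        linarith
      have hbox := my_box_bound hn i0 ((L:ℝ)*r) (ε*r) (by positivity) N hNbound
      refine hchain.trans (hbox.trans ?_)
      -- numeric estimate
      have hdiv : unitBallVol n / 2 ^ n ≤ unitBallVol n := by
        rw [div_eq_mul_inv]
        calc unitBallVol n * ((2:ℝ≥0∞) ^ n)⁻¹ ≤ unitBallVol n * 1 := by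
              refine mul_le_mul_right ?_ _
              rw [ENNReal.inv_le_one]
              exact one_le_pow_of_one_le' (by norm_num : (1:ℝ≥0∞) ≤ 2) n
          _ = unitBallVol n := mul_one _
      have e1 : ENNReal.ofReal (2*(ε*r)*Real.sqrt n)
          = ENNReal.ofReal (2*ε*Real.sqrt n) * ENNReal.ofReal r := by
        rw [← ENNReal.ofReal_mul (by positivity)]
        congr 1
        ring
      have e2 : ((3 * (2 * N + 1) ^ (n - 1) : ℕ) : ℝ≥0∞)
            * ENNReal.ofReal (2*(ε*r)*Real.sqrt n) ^ n
          = ENNReal.ofReal (((3 * (2 * N + 1) ^ (n - 1) : ℕ) : ℝ) * (2*ε*Real.sqrt n)^n)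
            * ENNReal.ofReal r ^ n := by
        rw [e1, mul_pow,
          ENNReal.ofReal_mul (by positivity : (0:ℝ) ≤ ((3 * (2 * N + 1) ^ (n - 1) : ℕ) : ℝ)),
          ENNReal.ofReal_pow (by positivity : (0:ℝ) ≤ 2*ε*Real.sqrt n),
          ENNReal.ofReal_natCast]
        ring
      calc unitBallVol n / 2 ^ n
            * (((3 * (2 * N + 1) ^ (n - 1) : ℕ) : ℝ≥0∞)
              * ENNReal.ofReal (2*(ε*r)*Real.sqrt n) ^ n)
          ≤ unitBallVol n
            * (((3 * (2 * N + 1) ^ (n - 1) : ℕ) : ℝ≥0∞)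
              * ENNReal.ofReal (2*(ε*r)*Real.sqrt n) ^ n) := mul_le_mul_left hdiv _
        _ = ENNReal.ofReal (((3 * (2 * N + 1) ^ (n - 1) : ℕ) : ℝ) * (2*ε*Real.sqrt n)^n)
            * (unitBallVol n * ENNReal.ofReal r ^ n) := by rw [e2]; ring
        _ ≤ ENNReal.ofReal (Creal * ε) * (unitBallVol n * ENNReal.ofReal r ^ n) :=
            mul_le_mul_left (ENNReal.ofReal_le_ofReal hcount) _
    exact Filter.limsup_le_of_le (by isBoundedDefault) hev
  -- conclude
  have hupper : upperDensity n f Set.univ x = 0 := by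
    by_contra h0
    have hfin : upperDensity n f Set.univ x ≤ ENNReal.ofReal (Creal * 1) :=
      main 1 ⟨one_pos, le_refl 1⟩
    have hne_top : upperDensity n f Set.univ x ≠ ∞ :=
      (hfin.trans_lt ENNReal.ofReal_lt_top).ne
    set t := (upperDensity n f Set.univ x).toReal with ht_def
    have ht : 0 < t := ENNReal.toReal_pos h0 hne_top
    set ε : ℝ := min 1 (t / (2*(Creal+1))) with hεdef
    have hεIoc : ε ∈ Set.Ioc (0:ℝ) 1 := by
      constructor
      · refine lt_min one_pos ?_
        positivity
      · exact min_le_left _ _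
    have h1 := main ε hεIoc
    have h2 : Creal * ε ≤ t/2 := by
      have hεle : ε ≤ t / (2*(Creal+1)) := min_le_right _ _
      have hε0' : 0 < ε := hεIoc.1
      have : Creal * ε ≤ (Creal+1) * (t/(2*(Creal+1))) := by
        refine mul_le_mul (by linarith) hεle hε0'.le (by linarith)
      calc Creal * ε ≤ (Creal+1) * (t/(2*(Creal+1))) := this
        _ = t/2 := by
            field_simp
    have h3 : upperDensity n f Set.univ x ≤ ENNReal.ofReal (t/2) :=
      h1.trans (ENNReal.ofReal_le_ofReal h2)
    have h4 : ENNReal.ofReal (t/2) < ENNReal.ofReal t := by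
      rw [ENNReal.ofReal_lt_ofReal_iff ht]
      linarith
    rw [ht_def, ENNReal.ofReal_toReal hne_top] at h4
    exact absurd (h3.trans_lt h4) (lt_irrefl _)
  have hlow : lowerDensity n f Set.univ x ≤ upperDensity n f Set.univ x :=
    Filter.liminf_le_limsup (by isBoundedDefault) (by isBoundedDefault)
  exact ⟨le_antisymm (hlow.trans_eq hupper) (zero_le'), hupper⟩


end
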